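/- If Ẑ₁ ↔ U ↔ Ẑ₂ is a Markov chain (i.e., Ẑ₁ and Ẑ₂ are conditionally independent given U) and (X₁,X₂) ↔ (Ẑ₁,Ẑ₂) ↔ U is a Markov chain, then I(X₁,X₂; Ẑ₁; Ẑ₂) ≤ I(X₁,X₂; U), where I(·;·;·) denotes interaction information. -/

import Mathlib

open scoped BigOperators

noncomputable section
set_option linter.unusedVariables false
set_option linter.unusedSectionVars false
set_option maxHeartbeats 1000000

namespace GW

variable {Ω : Type*} [Fintype Ω]

/-- Probability P[X = x] under a weight function `p` on a finite sample space. -/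
def pr {α : Type*} (p : Ω → ℝ) (X : Ω → α) (x : α) : ℝ :=
  ∑ ω, Set.indicator {ω' | X ω' = x} p ω

/-- `p` is a probability mass function on the sample space. -/
def IsProb (p : Ω → ℝ) : Prop := (∀ ω, 0 ≤ p ω) ∧ ∑ ω, p ω = 1

/-- The paired random variable (X, Y). -/
def pair {α β : Type*} (X : Ω → α) (Y : Ω → β) : Ω → α × β := fun ω => (X ω, Y ω)

/-- Mutual information I(X;Y). -/
def mi {α β : Type*} [Fintype α] [Fintype β] (p : Ω → ℝ) (X : Ω → α) (Y : Ω → β) : ℝ :=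
  ∑ x, ∑ y, pr p (pair X Y) (x, y) *
    Real.log (pr p (pair X Y) (x, y) / (pr p X x * pr p Y y))

/-- Conditional mutual information I(X;Y|Z). -/
def cmi {α β γ : Type*} [Fintype α] [Fintype β] [Fintype γ]
    (p : Ω → ℝ) (X : Ω → α) (Y : Ω → β) (Z : Ω → γ) : ℝ :=
  ∑ x, ∑ y, ∑ z,
    pr p (pair X (pair Y Z)) (x, y, z) *
      Real.log (pr p (pair X (pair Y Z)) (x, y, z) * pr p Z z /
        (pr p (pair X Z) (x, z) * pr p (pair Y Z) (y, z)))

/-- Interaction information I(X;Y;Z) = I(X;Y) - I(X;Y|Z). -/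
def ii {α β γ : Type*} [Fintype α] [Fintype β] [Fintype γ]
    (p : Ω → ℝ) (X : Ω → α) (Y : Ω → β) (Z : Ω → γ) : ℝ :=
  mi p X Y - cmi p X Y Z

/-- Conditional interaction information I(X;Y;Z|W) = I(X;Y|W) - I(X;Y|Z,W). -/
def cii {α β γ δ : Type*} [Fintype α] [Fintype β] [Fintype γ] [Fintype δ]
    (p : Ω → ℝ) (X : Ω → α) (Y : Ω → β) (Z : Ω → γ) (W : Ω → δ) : ℝ :=
  cmi p X Y W - cmi p X Y (pair Z W)

/-- Shannon entropy H(X). -/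
def ent {α : Type*} [Fintype α] (p : Ω → ℝ) (X : Ω → α) : ℝ :=
  - ∑ x, pr p X x * Real.log (pr p X x)

/-- Conditional entropy H(Y|X). -/
def condEnt {α β : Type*} [Fintype α] [Fintype β] (p : Ω → ℝ) (Y : Ω → β) (X : Ω → α) : ℝ :=
  - ∑ x, ∑ y, pr p (pair X Y) (x, y) * Real.log (pr p (pair X Y) (x, y) / pr p X x)

/-- Conditional independence A ⊥ B | C (i.e. the Markov chain A ↔ C ↔ B). -/
def CondIndep {α β γ : Type*} (p : Ω → ℝ) (A : Ω → α) (B : Ω → β) (C : Ω → γ) : Prop :=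
  ∀ a b c, pr p (pair A (pair B C)) (a, b, c) * pr p C c
    = pr p (pair A C) (a, c) * pr p (pair B C) (b, c)


section Helpers

lemma pr_congr {α β : Type*} (p : Ω → ℝ) (X : Ω → α) (Y : Ω → β) (x : α) (y : β)
    (h : ∀ ω, X ω = x ↔ Y ω = y) : pr p X x = pr p Y y := by
  unfold pr
  refine Finset.sum_congr rfl fun ω _ => ?_
  classical
  simp [Set.indicator_apply, h ω]

lemma pr_nonneg {α : Type*} {p : Ω → ℝ} (hp : ∀ ω, 0 ≤ p ω) (X : Ω → α) (x : α) :
    0 ≤ pr p X x :=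
  Finset.sum_nonneg fun ω _ => Set.indicator_nonneg (fun _ _ => hp _) _

lemma pr_fst {α β : Type*} [Fintype β] (p : Ω → ℝ) (X : Ω → α) (Y : Ω → β) (x : α) :
    pr p X x = ∑ y, pr p (pair X Y) (x, y) := by
  classical
  unfold pr pair
  rw [Finset.sum_comm]
  refine Finset.sum_congr rfl fun ω _ => ?_
  simp only [Set.indicator_apply, Set.mem_setOf_eq, Prod.mk.injEq]
  by_cases h : X ω = x
  · simp [h, ite_and, Finset.sum_ite_eq]
  · simp [h]

lemma pr_snd {α β : Type*} [Fintype α] (p : Ω → ℝ) (X : Ω → α) (Y : Ω → β) (y : β) :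
    pr p Y y = ∑ x, pr p (pair X Y) (x, y) := by
  classical
  unfold pr pair
  rw [Finset.sum_comm]
  refine Finset.sum_congr rfl fun ω _ => ?_
  simp only [Set.indicator_apply, Set.mem_setOf_eq, Prod.mk.injEq]
  by_cases h : Y ω = y
  · simp [h, ite_and, Finset.sum_ite_eq]
  · simp [h]
end Helpers

namespace GWAux

lemma le_sum1 {D : Type*} [Fintype D] {f : D → ℝ} (hf : ∀ d, 0 ≤ f d) (d : D) :
    f d ≤ ∑ d', f d' :=
  Finset.single_le_sum (fun i _ => hf i) (Finset.mem_univ d)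

lemma sum_rot {B C D : Type*} [Fintype B] [Fintype C] [Fintype D] (f : B → C → D → ℝ) :
    ∑ d, ∑ b, ∑ c, f b c d = ∑ b, ∑ c, ∑ d, f b c d := by
  rw [Finset.sum_comm]
  exact Finset.sum_congr rfl fun b _ => Finset.sum_comm

lemma GN3 {X Y Z : Type*} [Fintype X] [Fintype Y] [Fintype Z]
    (q : X → Y → Z → ℝ) (hq : ∀ x y z, 0 ≤ q x y z) :
    0 ≤ ∑ x, ∑ y, ∑ z, q x y z *
      Real.log (q x y z * (∑ x', ∑ y', q x' y' z) /
        ((∑ y', q x y' z) * (∑ x', q x' y z))) := by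
  have ha : ∀ x z, 0 ≤ ∑ y', q x y' z := fun x z => Finset.sum_nonneg fun _ _ => hq _ _ _
  have hb : ∀ y z, 0 ≤ ∑ x', q x' y z := fun y z => Finset.sum_nonneg fun _ _ => hq _ _ _
  have hc : ∀ z, 0 ≤ ∑ x', ∑ y', q x' y' z := fun z =>
    Finset.sum_nonneg fun _ _ => Finset.sum_nonneg fun _ _ => hq _ _ _
  have key : ∀ x y z, q x y z - (∑ y', q x y' z) * (∑ x', q x' y z) / (∑ x', ∑ y', q x' y' z)
      ≤ q x y z * Real.log (q x y z * (∑ x', ∑ y', q x' y' z) /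
        ((∑ y', q x y' z) * (∑ x', q x' y z))) := by
    intro x y z
    set Q := q x y z with hQ
    set A := ∑ y', q x y' z with hA
    set B := ∑ x', q x' y z with hB
    set C := ∑ x', ∑ y', q x' y' z with hC
    rcases eq_or_lt_of_le (hq x y z) with h0 | hpos
    · have h : 0 ≤ A * B / C := div_nonneg (mul_nonneg (ha x z) (hb y z)) (hc z)
      rw [show Q = 0 from hQ.trans h0.symm]
      simp only [zero_mul, zero_sub]
      exact neg_nonpos.mpr h
    · have hAp : 0 < A := lt_of_lt_of_le hpos (le_sum1 (fun y' => hq x y' z) y)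
      have hBp : 0 < B := lt_of_lt_of_le hpos (le_sum1 (fun x' => hq x' y z) x)
      have hCp : 0 < C := lt_of_lt_of_le hAp (le_sum1 (fun x' => ha x' z) x)
      have hlog : Real.log (Q * C / (A * B)) = - Real.log (A * B / (Q * C)) := by
        rw [← Real.log_inv, inv_div]
      have h1 : Real.log (A * B / (Q * C)) ≤ A * B / (Q * C) - 1 :=
        Real.log_le_sub_one_of_pos (by positivity)
      have h2 : Q * (A * B / (Q * C)) = A * B / C := by
        have hQ0 : Q ≠ 0 := hpos.ne'
        rw [mul_div_assoc', mul_div_mul_left _ _ hQ0]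
      rw [hlog]
      nlinarith [mul_le_mul_of_nonneg_left h1 hpos.le]
  have e1 : ∑ x, ∑ y, ∑ z,
      (q x y z - (∑ y', q x y' z) * (∑ x', q x' y z) / (∑ x', ∑ y', q x' y' z)) = 0 := by
    simp only [Finset.sum_sub_distrib]
    rw [sub_eq_zero]
    rw [show (∑ x, ∑ y, ∑ z, q x y z)
        = ∑ z, ∑ x, ∑ y, q x y z from (sum_rot _).symm]
    rw [show (∑ x, ∑ y, ∑ z, (∑ y', q x y' z) * (∑ x', q x' y z) / (∑ x', ∑ y', q x' y' z))
        = ∑ z, ∑ x, ∑ y, (∑ y', q x y' z) * (∑ x', q x' y z) / (∑ x', ∑ y', q x' y' z)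
        from (sum_rot _).symm]
    refine Finset.sum_congr rfl fun z _ => ?_
    have inner : ∀ x, (∑ y, (∑ y', q x y' z) * (∑ x', q x' y z) / (∑ x', ∑ y', q x' y' z))
        = (∑ y', q x y' z) * (∑ y, ∑ x', q x' y z) / (∑ x', ∑ y', q x' y' z) := by
      intro x
      rw [← Finset.sum_div, ← Finset.mul_sum]
    simp only [inner]
    have swap : (∑ y, ∑ x', q x' y z) = ∑ x', ∑ y', q x' y' z := Finset.sum_comm
    rw [show (∑ x, (∑ y', q x y' z) * (∑ y, ∑ x', q x' y z) / (∑ x', ∑ y', q x' y' z))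
        = (∑ x, ∑ y', q x y' z) * (∑ y, ∑ x', q x' y z) / (∑ x', ∑ y', q x' y' z) by
      rw [← Finset.sum_div, ← Finset.sum_mul]]
    rw [swap]
    rcases eq_or_ne (∑ x', ∑ y', q x' y' z) 0 with h | h
    · simp [h]
    · field_simp
  calc (0:ℝ) = ∑ x, ∑ y, ∑ z,
      (q x y z - (∑ y', q x y' z) * (∑ x', q x' y z) / (∑ x', ∑ y', q x' y' z)) := e1.symm
    _ ≤ _ := by
      refine Finset.sum_le_sum fun x _ => Finset.sum_le_sum fun y _ => Finset.sum_le_sum fun z _ => ?_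
      exact key x y z

section
variable {A B C D : Type*} [Fintype A] [Fintype B] [Fintype C] [Fintype D]

def mA (q : A → B → C → D → ℝ) (a : A) : ℝ := ∑ b, ∑ c, ∑ d, q a b c d
def mB (q : A → B → C → D → ℝ) (b : B) : ℝ := ∑ a, ∑ c, ∑ d, q a b c d
def mC (q : A → B → C → D → ℝ) (c : C) : ℝ := ∑ a, ∑ b, ∑ d, q a b c d
def mD (q : A → B → C → D → ℝ) (d : D) : ℝ := ∑ a, ∑ b, ∑ c, q a b c d
def mAB (q : A → B → C → D → ℝ) (a : A) (b : B) : ℝ := ∑ c, ∑ d, q a b c d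
def mAC (q : A → B → C → D → ℝ) (a : A) (c : C) : ℝ := ∑ b, ∑ d, q a b c d
def mAD (q : A → B → C → D → ℝ) (a : A) (d : D) : ℝ := ∑ b, ∑ c, q a b c d
def mBC (q : A → B → C → D → ℝ) (b : B) (c : C) : ℝ := ∑ a, ∑ d, q a b c d
def mBD (q : A → B → C → D → ℝ) (b : B) (d : D) : ℝ := ∑ a, ∑ c, q a b c d
def mCD (q : A → B → C → D → ℝ) (c : C) (d : D) : ℝ := ∑ a, ∑ b, q a b c d
def mABC (q : A → B → C → D → ℝ) (a : A) (b : B) (c : C) : ℝ := ∑ d, q a b c d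
def mABD (q : A → B → C → D → ℝ) (a : A) (b : B) (d : D) : ℝ := ∑ c, q a b c d
def mACD (q : A → B → C → D → ℝ) (a : A) (c : C) (d : D) : ℝ := ∑ b, q a b c d
def mBCD (q : A → B → C → D → ℝ) (b : B) (c : C) (d : D) : ℝ := ∑ a, q a b c d

variable (q : A → B → C → D → ℝ)

lemma sum_perm4 (f : A → B → C → D → ℝ) :
    ∑ b, ∑ c, ∑ a, ∑ d, f a b c d = ∑ a, ∑ b, ∑ c, ∑ d, f a b c d := by
  rw [show (∑ b, ∑ c, ∑ a, ∑ d, f a b c d) = ∑ b, ∑ a, ∑ c, ∑ d, f a b c d from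
    Finset.sum_congr rfl fun b _ => Finset.sum_comm]
  exact Finset.sum_comm

section
variable (hq : ∀ a b c d, 0 ≤ q a b c d)
include hq

lemma nABC : ∀ a b c, 0 ≤ mABC q a b c := fun a b c =>
  Finset.sum_nonneg fun _ _ => hq _ _ _ _
lemma nABD : ∀ a b d, 0 ≤ mABD q a b d := fun a b d =>
  Finset.sum_nonneg fun _ _ => hq _ _ _ _
lemma nACD : ∀ a c d, 0 ≤ mACD q a c d := fun a c d =>
  Finset.sum_nonneg fun _ _ => hq _ _ _ _
lemma nBCD : ∀ b c d, 0 ≤ mBCD q b c d := fun b c d =>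
  Finset.sum_nonneg fun _ _ => hq _ _ _ _
lemma nAB : ∀ a b, 0 ≤ mAB q a b := fun a b =>
  Finset.sum_nonneg fun _ _ => Finset.sum_nonneg fun _ _ => hq _ _ _ _
lemma nAC : ∀ a c, 0 ≤ mAC q a c := fun a c =>
  Finset.sum_nonneg fun _ _ => Finset.sum_nonneg fun _ _ => hq _ _ _ _
lemma nAD : ∀ a d, 0 ≤ mAD q a d := fun a d =>
  Finset.sum_nonneg fun _ _ => Finset.sum_nonneg fun _ _ => hq _ _ _ _

end

lemma collapseC (F : A → B → D → ℝ) :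
    (∑ a, ∑ b, ∑ c, ∑ d, q a b c d * F a b d) = ∑ a, ∑ d, ∑ b, mABD q a b d * F a b d := by
  refine Finset.sum_congr rfl fun a _ => ?_
  have step : ∀ b, (∑ c, ∑ d, q a b c d * F a b d) = ∑ d, mABD q a b d * F a b d := by
    intro b
    rw [Finset.sum_comm]
    exact Finset.sum_congr rfl fun d _ => (Finset.sum_mul _ _ _).symm
  simp only [step]
  exact Finset.sum_comm

lemma collapseB (F : A → C → D → ℝ) :
    (∑ a, ∑ b, ∑ c, ∑ d, q a b c d * F a c d) = ∑ a, ∑ d, ∑ c, mACD q a c d * F a c d := by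
  refine Finset.sum_congr rfl fun a _ => ?_
  have step : ∀ c, (∑ b, ∑ d, q a b c d * F a c d) = ∑ d, mACD q a c d * F a c d := by
    intro c
    rw [Finset.sum_comm]
    exact Finset.sum_congr rfl fun d _ => (Finset.sum_mul _ _ _).symm
  calc ∑ b, ∑ c, ∑ d, q a b c d * F a c d
      = ∑ c, ∑ b, ∑ d, q a b c d * F a c d := Finset.sum_comm
    _ = ∑ c, ∑ d, mACD q a c d * F a c d := Finset.sum_congr rfl fun c _ => step c
    _ = ∑ d, ∑ c, mACD q a c d * F a c d := Finset.sum_comm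

theorem key (hq : ∀ a b c d, 0 ≤ q a b c d)
    (h1 : ∀ b c d, mBCD q b c d * mD q d = mBD q b d * mCD q c d)
    (h2 : ∀ a b c d, q a b c d * mBC q b c = mABC q a b c * mBCD q b c d) :
    (∑ a, ∑ b, mAB q a b * Real.log (mAB q a b / (mA q a * mB q b))) -
      (∑ a, ∑ b, ∑ c, mABC q a b c *
        Real.log (mABC q a b c * mC q c / (mAC q a c * mBC q b c)))
      ≤ ∑ a, ∑ d, mAD q a d * Real.log (mAD q a d / (mA q a * mD q d)) := by
  -- expansions to 4-fold sums
  have Ead : (∑ a, ∑ d, mAD q a d * Real.log (mAD q a d / (mA q a * mD q d)))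
      = ∑ a, ∑ b, ∑ c, ∑ d, q a b c d * Real.log (mAD q a d / (mA q a * mD q d)) := by
    refine Finset.sum_congr rfl fun a _ => ?_
    simp only [mAD, Finset.sum_mul]
    rw [sum_rot]
  have Eab : (∑ a, ∑ b, mAB q a b * Real.log (mAB q a b / (mA q a * mB q b)))
      = ∑ a, ∑ b, ∑ c, ∑ d, q a b c d * Real.log (mAB q a b / (mA q a * mB q b)) := by
    refine Finset.sum_congr rfl fun a _ => Finset.sum_congr rfl fun b _ => ?_
    simp only [mAB, Finset.sum_mul]
  have Eabc : (∑ a, ∑ b, ∑ c, mABC q a b c *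
        Real.log (mABC q a b c * mC q c / (mAC q a c * mBC q b c)))
      = ∑ a, ∑ b, ∑ c, ∑ d, q a b c d *
        Real.log (mABC q a b c * mC q c / (mAC q a c * mBC q b c)) := by
    refine Finset.sum_congr rfl fun a _ => Finset.sum_congr rfl fun b _ =>
      Finset.sum_congr rfl fun c _ => ?_
    simp only [mABC, Finset.sum_mul]
  -- zero sums
  have hZ1 : (∑ a, ∑ b, ∑ c, ∑ d, q a b c d *
      Real.log (q a b c d * mBC q b c / (mABC q a b c * mBCD q b c d))) = 0 := by
    refine Finset.sum_eq_zero fun a _ => Finset.sum_eq_zero fun b _ =>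
      Finset.sum_eq_zero fun c _ => Finset.sum_eq_zero fun d _ => ?_
    rcases eq_or_lt_of_le (hq a b c d) with h0 | hpos
    · rw [← h0, zero_mul]
    · have pABC : 0 < mABC q a b c := lt_of_lt_of_le hpos (le_sum1 (fun d' => hq a b c d') d)
      have pBCD : 0 < mBCD q b c d := lt_of_lt_of_le hpos (le_sum1 (fun a' => hq a' b c d) a)
      rw [h2 a b c d, div_self (mul_pos pABC pBCD).ne', Real.log_one, mul_zero]
  have hZ2 : (∑ a, ∑ b, ∑ c, ∑ d, q a b c d *
      Real.log (mBCD q b c d * mD q d / (mBD q b d * mCD q c d))) = 0 := by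
    refine Finset.sum_eq_zero fun a _ => Finset.sum_eq_zero fun b _ =>
      Finset.sum_eq_zero fun c _ => Finset.sum_eq_zero fun d _ => ?_
    rcases eq_or_lt_of_le (hq a b c d) with h0 | hpos
    · rw [← h0, zero_mul]
    · have pABD : 0 < mABD q a b d := lt_of_lt_of_le hpos (le_sum1 (fun c' => hq a b c' d) c)
      have pACD : 0 < mACD q a c d := lt_of_lt_of_le hpos (le_sum1 (fun b' => hq a b' c d) b)
      have pBD : 0 < mBD q b d := lt_of_lt_of_le pABD (le_sum1 (fun a' => nABD q hq a' b d) a)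
      have pCD : 0 < mCD q c d := lt_of_lt_of_le pACD (le_sum1 (fun a' => nACD q hq a' c d) a)
      rw [h1 b c d, div_self (mul_pos pBD pCD).ne', Real.log_one, mul_zero]
  -- nonneg sums via GN3
  have hT1 : 0 ≤ ∑ a, ∑ b, ∑ c, ∑ d, q a b c d *
      Real.log (mABD q a b d * mB q b / (mAB q a b * mBD q b d)) := by
    have g := GN3 (fun (a : A) (d : D) (b : B) => mABD q a b d)
      (fun a d b => nABD q hq a b d)
    have r1 : ∀ b, (∑ a', ∑ d', mABD q a' b d') = mB q b := fun b =>
      Finset.sum_congr rfl fun a _ => Finset.sum_comm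
    have r2 : ∀ a b, (∑ d', mABD q a b d') = mAB q a b := fun a b => Finset.sum_comm
    have r3 : ∀ b d, (∑ a', mABD q a' b d) = mBD q b d := fun b d => rfl
    simp only [r1, r2, r3] at g
    rw [collapseC q (fun a b d => Real.log (mABD q a b d * mB q b / (mAB q a b * mBD q b d)))]
    exact g
  have hT2 : 0 ≤ ∑ a, ∑ b, ∑ c, ∑ d, q a b c d *
      Real.log (mACD q a c d * mC q c / (mAC q a c * mCD q c d)) := by
    have g := GN3 (fun (a : A) (d : D) (c : C) => mACD q a c d)
      (fun a d c => nACD q hq a c d)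
    have r1 : ∀ c, (∑ a', ∑ d', mACD q a' c d') = mC q c := fun c =>
      Finset.sum_congr rfl fun a _ => Finset.sum_comm
    have r2 : ∀ a c, (∑ d', mACD q a c d') = mAC q a c := fun a c => Finset.sum_comm
    have r3 : ∀ c d, (∑ a', mACD q a' c d) = mCD q c d := fun c d => rfl
    simp only [r1, r2, r3] at g
    rw [collapseB q (fun a c d => Real.log (mACD q a c d * mC q c / (mAC q a c * mCD q c d)))]
    exact g
  have hT3 : 0 ≤ ∑ a, ∑ b, ∑ c, ∑ d, q a b c d *
      Real.log (q a b c d * mAD q a d / (mABD q a b d * mACD q a c d)) := by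
    have g := GN3 (fun (b : B) (c : C) (ad : A × D) => q ad.1 b c ad.2)
      (fun b c ad => hq ad.1 b c ad.2)
    have r1 : ∀ (a : A) (d : D), (∑ b', ∑ c', q a b' c' d) = mAD q a d := fun a d => rfl
    have r2 : ∀ (a : A) (b : B) (d : D), (∑ c', q a b c' d) = mABD q a b d := fun a b d => rfl
    have r3 : ∀ (a : A) (c : C) (d : D), (∑ b', q a b' c d) = mACD q a c d := fun a c d => rfl
    simp only [r1, r2, r3, Fintype.sum_prod_type] at g
    rw [← sum_perm4]
    exact g
  -- the master per-term identity
  have master : ∀ a b c d,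
      q a b c d * Real.log (mAD q a d / (mA q a * mD q d)) +
        (q a b c d * Real.log (mABC q a b c * mC q c / (mAC q a c * mBC q b c)) +
          (q a b c d * Real.log (q a b c d * mBC q b c / (mABC q a b c * mBCD q b c d)) +
            q a b c d * Real.log (mBCD q b c d * mD q d / (mBD q b d * mCD q c d))))
      = q a b c d * Real.log (mAB q a b / (mA q a * mB q b)) +
        (q a b c d * Real.log (mABD q a b d * mB q b / (mAB q a b * mBD q b d)) +
          (q a b c d * Real.log (mACD q a c d * mC q c / (mAC q a c * mCD q c d)) +
            q a b c d * Real.log (q a b c d * mAD q a d / (mABD q a b d * mACD q a c d)))) := by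
    intro a b c d
    rcases eq_or_lt_of_le (hq a b c d) with h0 | hpos
    · rw [← h0]; ring
    · have pABC : 0 < mABC q a b c := lt_of_lt_of_le hpos (le_sum1 (fun d' => hq a b c d') d)
      have pABD : 0 < mABD q a b d := lt_of_lt_of_le hpos (le_sum1 (fun c' => hq a b c' d) c)
      have pACD : 0 < mACD q a c d := lt_of_lt_of_le hpos (le_sum1 (fun b' => hq a b' c d) b)
      have pBCD : 0 < mBCD q b c d := lt_of_lt_of_le hpos (le_sum1 (fun a' => hq a' b c d) a)
      have pAB : 0 < mAB q a b := lt_of_lt_of_le pABC (le_sum1 (fun c' => nABC q hq a b c') c)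
      have pAC : 0 < mAC q a c := lt_of_lt_of_le pABC (le_sum1 (fun b' => nABC q hq a b' c) b)
      have pAD : 0 < mAD q a d := lt_of_lt_of_le pABD (le_sum1 (fun b' => nABD q hq a b' d) b)
      have pBC : 0 < mBC q b c := lt_of_lt_of_le pABC (le_sum1 (fun a' => nABC q hq a' b c) a)
      have pBD : 0 < mBD q b d := lt_of_lt_of_le pABD (le_sum1 (fun a' => nABD q hq a' b d) a)
      have pCD : 0 < mCD q c d := lt_of_lt_of_le pACD (le_sum1 (fun a' => nACD q hq a' c d) a)
      have pA : 0 < mA q a := lt_of_lt_of_le pAB (le_sum1 (fun b' => nAB q hq a b') b)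
      have pB : 0 < mB q b := lt_of_lt_of_le pAB (le_sum1 (fun a' => nAB q hq a' b) a)
      have pC : 0 < mC q c := lt_of_lt_of_le pAC (le_sum1 (fun a' => nAC q hq a' c) a)
      have pD : 0 < mD q d := lt_of_lt_of_le pAD (le_sum1 (fun a' => nAD q hq a' d) a)
      rw [Real.log_div pAD.ne' (mul_pos pA pD).ne', Real.log_mul pA.ne' pD.ne',
        Real.log_div (mul_pos pABC pC).ne' (mul_pos pAC pBC).ne',
        Real.log_mul pABC.ne' pC.ne', Real.log_mul pAC.ne' pBC.ne',
        Real.log_div (mul_pos hpos pBC).ne' (mul_pos pABC pBCD).ne',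
        Real.log_mul hpos.ne' pBC.ne', Real.log_mul pABC.ne' pBCD.ne',
        Real.log_div (mul_pos pBCD pD).ne' (mul_pos pBD pCD).ne',
        Real.log_mul pBCD.ne' pD.ne', Real.log_mul pBD.ne' pCD.ne',
        Real.log_div pAB.ne' (mul_pos pA pB).ne', Real.log_mul pA.ne' pB.ne',
        Real.log_div (mul_pos pABD pB).ne' (mul_pos pAB pBD).ne',
        Real.log_mul pABD.ne' pB.ne', Real.log_mul pAB.ne' pBD.ne',
        Real.log_div (mul_pos pACD pC).ne' (mul_pos pAC pCD).ne',
        Real.log_mul pACD.ne' pC.ne', Real.log_mul pAC.ne' pCD.ne',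
        Real.log_div (mul_pos hpos pAD).ne' (mul_pos pABD pACD).ne',
        Real.log_mul hpos.ne' pAD.ne', Real.log_mul pABD.ne' pACD.ne']
      ring
  have E : (∑ a, ∑ b, ∑ c, ∑ d, q a b c d * Real.log (mAD q a d / (mA q a * mD q d))) +
      ((∑ a, ∑ b, ∑ c, ∑ d, q a b c d *
          Real.log (mABC q a b c * mC q c / (mAC q a c * mBC q b c))) +
        ((∑ a, ∑ b, ∑ c, ∑ d, q a b c d *
            Real.log (q a b c d * mBC q b c / (mABC q a b c * mBCD q b c d))) +
          (∑ a, ∑ b, ∑ c, ∑ d, q a b c d *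
            Real.log (mBCD q b c d * mD q d / (mBD q b d * mCD q c d)))))
      = (∑ a, ∑ b, ∑ c, ∑ d, q a b c d * Real.log (mAB q a b / (mA q a * mB q b))) +
        ((∑ a, ∑ b, ∑ c, ∑ d, q a b c d *
            Real.log (mABD q a b d * mB q b / (mAB q a b * mBD q b d))) +
          ((∑ a, ∑ b, ∑ c, ∑ d, q a b c d *
              Real.log (mACD q a c d * mC q c / (mAC q a c * mCD q c d))) +
            (∑ a, ∑ b, ∑ c, ∑ d, q a b c d *
              Real.log (q a b c d * mAD q a d / (mABD q a b d * mACD q a c d))))) := by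
    have h := Finset.sum_congr rfl fun a (_ : a ∈ Finset.univ) =>
      Finset.sum_congr rfl fun b (_ : b ∈ Finset.univ) =>
        Finset.sum_congr rfl fun c (_ : c ∈ Finset.univ) =>
          Finset.sum_congr rfl fun d (_ : d ∈ Finset.univ) => master a b c d
    simpa only [Finset.sum_add_distrib] using h
  rw [Ead, Eab, Eabc]
  linarith [hZ1, hZ2, hT1, hT2, hT3, E]

end

end GWAux

/-- under the Wyner Markov conditions, I(X;Ẑ₁;Ẑ₂) ≤ I(X;U). -/
theorem interaction_le_wyner
    {α₁ α₂ β₁ β₂ υ : Type*} [Fintype α₁] [Fintype α₂] [Fintype β₁] [Fintype β₂] [Fintype υ]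
    (p : Ω → ℝ) (hp : IsProb p)
    (X₁ : Ω → α₁) (X₂ : Ω → α₂) (Z₁ : Ω → β₁) (Z₂ : Ω → β₂) (U : Ω → υ)
    (hmc1 : CondIndep p Z₁ Z₂ U)
    (hmc2 : CondIndep p (pair X₁ X₂) U (pair Z₁ Z₂)) :
    ii p (pair X₁ X₂) Z₁ Z₂ ≤ mi p (pair X₁ X₂) U := by
  classical
  obtain ⟨hp0, -⟩ := hp
  set Q : (α₁ × α₂) → β₁ → β₂ → υ → ℝ :=
    fun a b c d => pr p (pair (pair X₁ X₂) (pair Z₁ (pair Z₂ U))) (a, (b, (c, d))) with hQdef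
  have hq : ∀ a b c d, 0 ≤ Q a b c d := fun a b c d => pr_nonneg hp0 _ _
  have hA : ∀ a, pr p (pair X₁ X₂) a = GWAux.mA Q a := by
    intro a
    rw [pr_fst p (pair X₁ X₂) (pair Z₁ (pair Z₂ U)) a]
    simp only [Fintype.sum_prod_type, hQdef, GWAux.mA]
  have hB : ∀ b, pr p Z₁ b = GWAux.mB Q b := by
    intro b
    have e : ∀ (a : α₁ × α₂) (c : β₂) (d : υ),
        pr p (pair Z₁ (pair (pair X₁ X₂) (pair Z₂ U))) (b, (a, (c, d))) = Q a b c d := by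
      intro a c d
      simp only [hQdef]
      exact pr_congr p _ _ _ _ fun ω => by simp only [pair, Prod.mk.injEq]; tauto
    rw [pr_fst p Z₁ (pair (pair X₁ X₂) (pair Z₂ U)) b]
    simp only [Fintype.sum_prod_type, e, hQdef, GWAux.mB]
  have hC : ∀ c, pr p Z₂ c = GWAux.mC Q c := by
    intro c
    have e : ∀ (a : α₁ × α₂) (b : β₁) (d : υ),
        pr p (pair Z₂ (pair (pair X₁ X₂) (pair Z₁ U))) (c, (a, (b, d))) = Q a b c d := by
      intro a b d
      simp only [hQdef]
      exact pr_congr p _ _ _ _ fun ω => by simp only [pair, Prod.mk.injEq]; tauto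
    rw [pr_fst p Z₂ (pair (pair X₁ X₂) (pair Z₁ U)) c]
    simp only [Fintype.sum_prod_type, e, hQdef, GWAux.mC]
  have hD : ∀ d, pr p U d = GWAux.mD Q d := by
    intro d
    have e : ∀ (a : α₁ × α₂) (b : β₁) (c : β₂),
        pr p (pair U (pair (pair X₁ X₂) (pair Z₁ Z₂))) (d, (a, (b, c))) = Q a b c d := by
      intro a b c
      simp only [hQdef]
      exact pr_congr p _ _ _ _ fun ω => by simp only [pair, Prod.mk.injEq]; tauto
    rw [pr_fst p U (pair (pair X₁ X₂) (pair Z₁ Z₂)) d]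
    simp only [Fintype.sum_prod_type, e, hQdef, GWAux.mD]
  have hAB : ∀ a b, pr p (pair (pair X₁ X₂) Z₁) (a, b) = GWAux.mAB Q a b := by
    intro a b
    rw [pr_fst p (pair (pair X₁ X₂) Z₁) (pair Z₂ U) (a, b)]
    simp only [Fintype.sum_prod_type, hQdef, GWAux.mAB]
    refine Finset.sum_congr rfl fun c _ => Finset.sum_congr rfl fun d _ => ?_
    exact pr_congr p _ _ _ _ fun ω => by simp only [pair, Prod.mk.injEq]; tauto
  have hAC : ∀ a c, pr p (pair (pair X₁ X₂) Z₂) (a, c) = GWAux.mAC Q a c := by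
    intro a c
    rw [pr_fst p (pair (pair X₁ X₂) Z₂) (pair Z₁ U) (a, c)]
    simp only [Fintype.sum_prod_type, hQdef, GWAux.mAC]
    refine Finset.sum_congr rfl fun b _ => Finset.sum_congr rfl fun d _ => ?_
    exact pr_congr p _ _ _ _ fun ω => by simp only [pair, Prod.mk.injEq]; tauto
  have hAD : ∀ a d, pr p (pair (pair X₁ X₂) U) (a, d) = GWAux.mAD Q a d := by
    intro a d
    rw [pr_fst p (pair (pair X₁ X₂) U) (pair Z₁ Z₂) (a, d)]
    simp only [Fintype.sum_prod_type, hQdef, GWAux.mAD]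
    refine Finset.sum_congr rfl fun b _ => Finset.sum_congr rfl fun c _ => ?_
    exact pr_congr p _ _ _ _ fun ω => by simp only [pair, Prod.mk.injEq]; tauto
  have hBC : ∀ b c, pr p (pair Z₁ Z₂) (b, c) = GWAux.mBC Q b c := by
    intro b c
    have e : ∀ (a : α₁ × α₂) (d : υ),
        pr p (pair (pair Z₁ Z₂) (pair (pair X₁ X₂) U)) ((b, c), (a, d)) = Q a b c d := by
      intro a d
      simp only [hQdef]
      exact pr_congr p _ _ _ _ fun ω => by simp only [pair, Prod.mk.injEq]; tauto
    rw [pr_fst p (pair Z₁ Z₂) (pair (pair X₁ X₂) U) (b, c)]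
    simp only [Fintype.sum_prod_type, e, hQdef, GWAux.mBC]
  have hBD : ∀ b d, pr p (pair Z₁ U) (b, d) = GWAux.mBD Q b d := by
    intro b d
    have e : ∀ (a : α₁ × α₂) (c : β₂),
        pr p (pair (pair Z₁ U) (pair (pair X₁ X₂) Z₂)) ((b, d), (a, c)) = Q a b c d := by
      intro a c
      simp only [hQdef]
      exact pr_congr p _ _ _ _ fun ω => by simp only [pair, Prod.mk.injEq]; tauto
    rw [pr_fst p (pair Z₁ U) (pair (pair X₁ X₂) Z₂) (b, d)]
    simp only [Fintype.sum_prod_type, e, hQdef, GWAux.mBD]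
  have hCD : ∀ c d, pr p (pair Z₂ U) (c, d) = GWAux.mCD Q c d := by
    intro c d
    have e : ∀ (a : α₁ × α₂) (b : β₁),
        pr p (pair (pair Z₂ U) (pair (pair X₁ X₂) Z₁)) ((c, d), (a, b)) = Q a b c d := by
      intro a b
      simp only [hQdef]
      exact pr_congr p _ _ _ _ fun ω => by simp only [pair, Prod.mk.injEq]; tauto
    rw [pr_fst p (pair Z₂ U) (pair (pair X₁ X₂) Z₁) (c, d)]
    simp only [Fintype.sum_prod_type, e, hQdef, GWAux.mCD]
  have hABC : ∀ a b c, pr p (pair (pair X₁ X₂) (pair Z₁ Z₂)) (a, (b, c)) = GWAux.mABC Q a b c := by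
    intro a b c
    rw [pr_fst p (pair (pair X₁ X₂) (pair Z₁ Z₂)) U (a, (b, c))]
    simp only [hQdef, GWAux.mABC]
    refine Finset.sum_congr rfl fun d _ => ?_
    exact pr_congr p _ _ _ _ fun ω => by simp only [pair, Prod.mk.injEq]; tauto
  have hBCD : ∀ b c d, pr p (pair Z₁ (pair Z₂ U)) (b, (c, d)) = GWAux.mBCD Q b c d := by
    intro b c d
    rw [pr_snd p (pair X₁ X₂) (pair Z₁ (pair Z₂ U)) (b, (c, d))]
    simp only [hQdef, GWAux.mBCD]
  have hUZ : ∀ d b c, pr p (pair U (pair Z₁ Z₂)) (d, (b, c)) = GWAux.mBCD Q b c d := by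
    intro d b c
    rw [pr_snd p (pair X₁ X₂) (pair U (pair Z₁ Z₂)) (d, (b, c))]
    simp only [hQdef, GWAux.mBCD]
    refine Finset.sum_congr rfl fun a _ => ?_
    exact pr_congr p _ _ _ _ fun ω => by simp only [pair, Prod.mk.injEq]; tauto
  have hAUZ : ∀ a b c d,
      pr p (pair (pair X₁ X₂) (pair U (pair Z₁ Z₂))) (a, (d, (b, c))) = Q a b c d := by
    intro a b c d
    simp only [hQdef]
    exact pr_congr p _ _ _ _ fun ω => by simp only [pair, Prod.mk.injEq]; tauto
  have h1 : ∀ b c d, GWAux.mBCD Q b c d * GWAux.mD Q d = GWAux.mBD Q b d * GWAux.mCD Q c d := by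
    intro b c d
    have h := hmc1 b c d
    rw [hBCD b c d, hD d, hBD b d, hCD c d] at h
    exact h
  have h2 : ∀ a b c d, Q a b c d * GWAux.mBC Q b c = GWAux.mABC Q a b c * GWAux.mBCD Q b c d := by
    intro a b c d
    have h := hmc2 a d (b, c)
    rw [hAUZ a b c d, hBC b c, hABC a b c, hUZ d b c] at h
    exact h
  have main := GWAux.key Q hq h1 h2
  simp only [ii, mi, cmi, hAB, hA, hB, hABC, hC, hAC, hBC, hAD, hD]
  exact main


end GW
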